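/- If g: S^M → ℝ is a bounded concave function, then the function Tg defined by (Tg)(π) = ∫_E m(dx) D(π,x) g(D₀(π,x)/D(π,x), ..., D_M(π,x)/D(π,x)) is also bounded and concave on S^M. -/

import Mathlib

open MeasureTheory

/-- `D_i(π,x)`. -/
noncomputable def Dcoef {E : Type*} {M : ℕ} (p : ℝ) (ν : Fin (M + 1) → ℝ)
    (f : Fin (M + 1) → E → ℝ) (π : Fin (M + 1) → ℝ) (x : E) (i : Fin (M + 1)) : ℝ :=
  if i = 0 then (1 - p) * π 0 * f 0 x else (π i + π 0 * p * ν i) * f i x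

/-- `D(π,x) = Σ_{i=0}^M D_i(π,x)`. -/
noncomputable def Dtot {E : Type*} {M : ℕ} (p : ℝ) (ν : Fin (M + 1) → ℝ)
    (f : Fin (M + 1) → E → ℝ) (π : Fin (M + 1) → ℝ) (x : E) : ℝ :=
  ∑ i : Fin (M + 1), Dcoef p ν f π x i

/-- The operator `T`:
`(Tg)(π) = ∫_E m(dx) D(π,x) g(D₀(π,x)/D(π,x), …, D_M(π,x)/D(π,x))`. -/
noncomputable def Toper {E : Type*} [MeasurableSpace E] (m : Measure E) {M : ℕ}
    (p : ℝ) (ν : Fin (M + 1) → ℝ) (f : Fin (M + 1) → E → ℝ)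
    (g : (Fin (M + 1) → ℝ) → ℝ) (π : Fin (M + 1) → ℝ) : ℝ :=
  ∫ x, Dtot p ν f π x * g (fun i => Dcoef p ν f π x i / Dtot p ν f π x) ∂m

lemma Dcoef_eq {E : Type*} {M : ℕ} (p : ℝ) (ν : Fin (M + 1) → ℝ)
    (f : Fin (M + 1) → E → ℝ) (π : Fin (M + 1) → ℝ) (x : E) (i : Fin (M + 1)) :
    Dcoef p ν f π x i = (if i = 0 then (1 - p) * π 0 else π i + π 0 * p * ν i) * f i x := by
  unfold Dcoef
  split <;> rename_i h
  · subst h; ring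
  · ring

lemma Dcoef_nonneg {E : Type*} {M : ℕ} {p : ℝ} (hp : p ∈ Set.Ioo (0:ℝ) 1)
    {ν : Fin (M + 1) → ℝ} (hν : ∀ i, 0 ≤ ν i)
    {f : Fin (M + 1) → E → ℝ} (hf : ∀ i x, 0 ≤ f i x)
    {π : Fin (M + 1) → ℝ} (hπ : ∀ i, 0 ≤ π i) (x : E) (i : Fin (M + 1)) :
    0 ≤ Dcoef p ν f π x i := by
  rw [Dcoef_eq]
  refine mul_nonneg ?_ (hf i x)
  split
  · nlinarith [hπ 0, hp.2]
  · have := mul_nonneg (mul_nonneg (hπ 0) hp.1.le) (hν i); linarith [hπ i]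

lemma Dtot_nonneg {E : Type*} {M : ℕ} {p : ℝ} (hp : p ∈ Set.Ioo (0:ℝ) 1)
    {ν : Fin (M + 1) → ℝ} (hν : ∀ i, 0 ≤ ν i)
    {f : Fin (M + 1) → E → ℝ} (hf : ∀ i x, 0 ≤ f i x)
    {π : Fin (M + 1) → ℝ} (hπ : ∀ i, 0 ≤ π i) (x : E) :
    0 ≤ Dtot p ν f π x :=
  Finset.sum_nonneg fun i _ => Dcoef_nonneg hp hν hf hπ x i

lemma Dcoef_linear {E : Type*} {M : ℕ} (p : ℝ) (ν : Fin (M + 1) → ℝ)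
    (f : Fin (M + 1) → E → ℝ) (a b : ℝ) (y z : Fin (M + 1) → ℝ) (x : E) (i : Fin (M + 1)) :
    Dcoef p ν f (a • y + b • z) x i = a * Dcoef p ν f y x i + b * Dcoef p ν f z x i := by
  simp only [Dcoef_eq, Pi.add_apply, Pi.smul_apply, smul_eq_mul]
  split <;> ring

lemma Dtot_linear {E : Type*} {M : ℕ} (p : ℝ) (ν : Fin (M + 1) → ℝ)
    (f : Fin (M + 1) → E → ℝ) (a b : ℝ) (y z : Fin (M + 1) → ℝ) (x : E) :
    Dtot p ν f (a • y + b • z) x = a * Dtot p ν f y x + b * Dtot p ν f z x := by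
  unfold Dtot
  simp only [Dcoef_linear, Finset.sum_add_distrib, Finset.mul_sum]

lemma ratio_mem {E : Type*} {M : ℕ} {p : ℝ} {ν : Fin (M + 1) → ℝ}
    {f : Fin (M + 1) → E → ℝ} {π : Fin (M + 1) → ℝ} {x : E}
    (hnn : ∀ i, 0 ≤ Dcoef p ν f π x i) (hD : 0 < Dtot p ν f π x) :
    (fun i => Dcoef p ν f π x i / Dtot p ν f π x) ∈ stdSimplex ℝ (Fin (M + 1)) := by
  constructor
  · intro i
    exact div_nonneg (hnn i) hD.le
  · rw [← Finset.sum_div]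
    exact div_self hD.ne'

/-- if `g : S^M → ℝ` is bounded and concave, then so is `Tg`. -/
theorem Top_preserves_bounded_concave
    {E : Type*} [MeasurableSpace E] (m : Measure E) [SigmaFinite m]
    {M : ℕ} (hM : 0 < M) (p : ℝ) (hp : p ∈ Set.Ioo (0 : ℝ) 1)
    (ν : Fin (M + 1) → ℝ) (hν0 : ν 0 = 0) (hνpos : ∀ i : Fin (M + 1), i ≠ 0 → 0 < ν i)
    (hνsum : ∑ i : Fin (M + 1), ν i = 1)
    (f : Fin (M + 1) → E → ℝ) (hfmeas : ∀ i, Measurable (f i))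
    (hfnonneg : ∀ i x, 0 ≤ f i x)
    (hfint : ∀ i, ∫⁻ x, ENNReal.ofReal (f i x) ∂m = 1)
    (g : (Fin (M + 1) → ℝ) → ℝ) (hgmeas : Measurable g)
    (hgbdd : ∃ C : ℝ, ∀ π ∈ stdSimplex ℝ (Fin (M + 1)), |g π| ≤ C)
    (hgconc : ConcaveOn ℝ (stdSimplex ℝ (Fin (M + 1))) g) :
    ConcaveOn ℝ (stdSimplex ℝ (Fin (M + 1))) (Toper m p ν f g) ∧
      ∃ C : ℝ, ∀ π ∈ stdSimplex ℝ (Fin (M + 1)), |Toper m p ν f g π| ≤ C := by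
  obtain ⟨C, hC⟩ := hgbdd
  set C' : ℝ := max C 0 with hC'def
  have hC'0 : (0:ℝ) ≤ C' := le_max_right _ _
  have hν' : ∀ i, 0 ≤ ν i := by
    intro i
    by_cases h : i = 0
    · simp [h, hν0]
    · exact (hνpos i h).le
  set F : (Fin (M + 1) → ℝ) → E → ℝ :=
    fun π x => Dtot p ν f π x * g (fun i => Dcoef p ν f π x i / Dtot p ν f π x) with hFdef
  -- integrability of each f i
  have hfint' : ∀ i, Integrable (f i) m := by
    intro i
    refine ⟨(hfmeas i).aestronglyMeasurable, ?_⟩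
    rw [hasFiniteIntegral_iff_ofReal (Filter.Eventually.of_forall (hfnonneg i)), hfint i]
    exact ENNReal.one_lt_top
  have hfint1 : ∀ i, ∫ x, f i x ∂m = 1 := by
    intro i
    rw [integral_eq_lintegral_of_nonneg_ae (Filter.Eventually.of_forall (hfnonneg i))
      (hfmeas i).aestronglyMeasurable, hfint i, ENNReal.toReal_one]
  -- measurability
  have hDcmeas : ∀ π i, Measurable fun x => Dcoef p ν f π x i := by
    intro π i
    simp only [Dcoef_eq]
    exact measurable_const.mul (hfmeas i)
  have hDmeas : ∀ π, Measurable fun x => Dtot p ν f π x := by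
    intro π
    unfold Dtot
    exact Finset.measurable_sum _ fun i _ => hDcmeas π i
  have hFmeas : ∀ π, Measurable (F π) := by
    intro π
    exact (hDmeas π).mul
      (hgmeas.comp (measurable_pi_lambda _ fun i => (hDcmeas π i).div (hDmeas π)))
  -- pointwise bound
  have hFbound : ∀ π, (∀ i, 0 ≤ π i) → ∀ x, |F π x| ≤ C' * Dtot p ν f π x := by
    intro π hπ x
    have hD0 : 0 ≤ Dtot p ν f π x := Dtot_nonneg hp hν' hfnonneg hπ x
    rcases eq_or_lt_of_le hD0 with h | h
    · simp only [hFdef, ← h, zero_mul, abs_zero, mul_zero, le_refl]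
    · have hmem := ratio_mem (Dcoef_nonneg hp hν' hfnonneg hπ x) h
      have hg := hC _ hmem
      simp only [hFdef, abs_mul, abs_of_pos h]
      calc Dtot p ν f π x * |g fun i => Dcoef p ν f π x i / Dtot p ν f π x|
          ≤ Dtot p ν f π x * C' := by
            exact mul_le_mul_of_nonneg_left (hg.trans (le_max_left _ _)) h.le
        _ = C' * Dtot p ν f π x := mul_comm _ _
  -- integrability of Dtot and F
  have hDint : ∀ π, Integrable (fun x => Dtot p ν f π x) m := by
    intro π
    unfold Dtot
    refine integrable_finset_sum _ fun i _ => ?_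
    simp only [Dcoef_eq]
    exact (hfint' i).const_mul _
  have hFint : ∀ π, (∀ i, 0 ≤ π i) → Integrable (F π) m := by
    intro π hπ
    refine Integrable.mono' ((hDint π).const_mul C') (hFmeas π).aestronglyMeasurable ?_
    exact Filter.Eventually.of_forall fun x => by
      simpa [Real.norm_eq_abs] using hFbound π hπ x
  -- integral of Dtot = 1 on the simplex
  have hDintegral : ∀ π ∈ stdSimplex ℝ (Fin (M + 1)), ∫ x, Dtot p ν f π x ∂m = 1 := by
    intro π hπ
    have h1 : ∫ x, Dtot p ν f π x ∂m
        = ∑ i : Fin (M + 1), (if i = 0 then (1 - p) * π 0 else π i + π 0 * p * ν i)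
            * ∫ x, f i x ∂m := by
      unfold Dtot
      rw [integral_finset_sum _ (fun i _ => by
        simp only [Dcoef_eq]; exact (hfint' i).const_mul _)]
      refine Finset.sum_congr rfl fun i _ => ?_
      simp only [Dcoef_eq]
      rw [integral_const_mul]
    rw [h1]
    have h2 : ∀ i : Fin (M + 1),
        (if i = 0 then (1 - p) * π 0 else π i + π 0 * p * ν i)
          = (π i + π 0 * p * ν i) + (if i = 0 then -(p * π 0) else 0) := by
      intro i
      split <;> rename_i h
      · subst h; rw [hν0]; ring
      · ring
    simp only [hfint1, mul_one]
    rw [Finset.sum_congr rfl fun i _ => h2 i, Finset.sum_add_distrib,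
      Finset.sum_add_distrib, ← Finset.mul_sum, Finset.sum_ite_eq' Finset.univ 0
        (fun _ => -(p * π 0))]
    simp only [Finset.sum_add_distrib, hπ.2, hνsum, mul_one]
    simp only [Finset.mem_univ, if_true]
    ring
  -- pointwise concavity
  have key : ∀ y z : Fin (M + 1) → ℝ, (∀ i, 0 ≤ y i) → (∀ i, 0 ≤ z i) →
      ∀ a b : ℝ, 0 ≤ a → 0 ≤ b → a + b = 1 → ∀ x : E,
      a * F y x + b * F z x ≤ F (a • y + b • z) x := by
    intro y z hy hz a b ha hb hab x
    have hDy0 : 0 ≤ Dtot p ν f y x := Dtot_nonneg hp hν' hfnonneg hy x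
    have hDz0 : 0 ≤ Dtot p ν f z x := Dtot_nonneg hp hν' hfnonneg hz x
    have hDπ : Dtot p ν f (a • y + b • z) x
        = a * Dtot p ν f y x + b * Dtot p ν f z x := Dtot_linear p ν f a b y z x
    by_cases hpos : 0 < a * Dtot p ν f y x + b * Dtot p ν f z x
    · by_cases hy0 : Dtot p ν f y x = 0
      · -- degenerate y
        have hcoefy : ∀ i, Dcoef p ν f y x i = 0 := fun i =>
          (Finset.sum_eq_zero_iff_of_nonneg
            (fun j _ => Dcoef_nonneg hp hν' hfnonneg hy x j)).1 hy0 i (Finset.mem_univ i)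
        have hbz : 0 < b * Dtot p ν f z x := by
          rw [hy0] at hpos; simpa using hpos
        have hbne : b ≠ 0 := by
          rintro rfl; simp at hbz
        have hratio : (fun i => Dcoef p ν f (a • y + b • z) x i
            / Dtot p ν f (a • y + b • z) x)
            = fun i => Dcoef p ν f z x i / Dtot p ν f z x := by
          funext i
          rw [Dcoef_linear, hDπ, hcoefy i, hy0]
          simp only [mul_zero, zero_add]
          exact mul_div_mul_left _ _ hbne
        have e1 : F y x = 0 := by
          simp only [hFdef]; rw [hy0, zero_mul]
        have e2 : F (a • y + b • z) x = b * F z x := by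
          simp only [hFdef]; rw [hratio, hDπ, hy0]; ring
        rw [e1, e2, mul_zero, zero_add]
      · by_cases hz0 : Dtot p ν f z x = 0
        · -- degenerate z
          have hcoefz : ∀ i, Dcoef p ν f z x i = 0 := fun i =>
            (Finset.sum_eq_zero_iff_of_nonneg
              (fun j _ => Dcoef_nonneg hp hν' hfnonneg hz x j)).1 hz0 i (Finset.mem_univ i)
          have haz : 0 < a * Dtot p ν f y x := by
            rw [hz0] at hpos; simpa using hpos
          have hane : a ≠ 0 := by
            rintro rfl; simp at haz
          have hratio : (fun i => Dcoef p ν f (a • y + b • z) x i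
              / Dtot p ν f (a • y + b • z) x)
              = fun i => Dcoef p ν f y x i / Dtot p ν f y x := by
            funext i
            rw [Dcoef_linear, hDπ, hcoefz i, hz0]
            simp only [mul_zero, add_zero]
            exact mul_div_mul_left _ _ hane
          have e1 : F z x = 0 := by
            simp only [hFdef]; rw [hz0, zero_mul]
          have e2 : F (a • y + b • z) x = a * F y x := by
            simp only [hFdef]; rw [hratio, hDπ, hz0]; ring
          rw [e1, e2, mul_zero, add_zero]
        · -- main case
          have hDyp : 0 < Dtot p ν f y x := lt_of_le_of_ne hDy0 (Ne.symm hy0)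
          have hDzp : 0 < Dtot p ν f z x := lt_of_le_of_ne hDz0 (Ne.symm hz0)
          have hlam : 0 ≤ a * Dtot p ν f y x
              / (a * Dtot p ν f y x + b * Dtot p ν f z x) :=
            div_nonneg (mul_nonneg ha hDy0) hpos.le
          have hmu : 0 ≤ b * Dtot p ν f z x
              / (a * Dtot p ν f y x + b * Dtot p ν f z x) :=
            div_nonneg (mul_nonneg hb hDz0) hpos.le
          have hlm : a * Dtot p ν f y x / (a * Dtot p ν f y x + b * Dtot p ν f z x)
              + b * Dtot p ν f z x / (a * Dtot p ν f y x + b * Dtot p ν f z x) = 1 := by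
            rw [← add_div]
            exact div_self hpos.ne'
          have hcy := ratio_mem (Dcoef_nonneg hp hν' hfnonneg hy x) hDyp
          have hcz := ratio_mem (Dcoef_nonneg hp hν' hfnonneg hz x) hDzp
          have hgc := hgconc.2 hcy hcz hlam hmu hlm
          have hratio : (fun i => Dcoef p ν f (a • y + b • z) x i
              / Dtot p ν f (a • y + b • z) x)
              = (a * Dtot p ν f y x / (a * Dtot p ν f y x + b * Dtot p ν f z x))
                  • (fun i => Dcoef p ν f y x i / Dtot p ν f y x)
                + (b * Dtot p ν f z x / (a * Dtot p ν f y x + b * Dtot p ν f z x))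
                  • (fun i => Dcoef p ν f z x i / Dtot p ν f z x) := by
            funext i
            simp only [Pi.add_apply, Pi.smul_apply, smul_eq_mul, Dcoef_linear, hDπ]
            field_simp
          have hlam' : a * Dtot p ν f y x / (a * Dtot p ν f y x + b * Dtot p ν f z x)
              * (a * Dtot p ν f y x + b * Dtot p ν f z x) = a * Dtot p ν f y x :=
            div_mul_cancel₀ _ hpos.ne'
          have hmu' : b * Dtot p ν f z x / (a * Dtot p ν f y x + b * Dtot p ν f z x)
              * (a * Dtot p ν f y x + b * Dtot p ν f z x) = b * Dtot p ν f z x :=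
            div_mul_cancel₀ _ hpos.ne'
          simp only [hFdef]
          rw [hratio, hDπ]
          simp only [smul_eq_mul] at hgc
          calc a * (Dtot p ν f y x * g fun i => Dcoef p ν f y x i / Dtot p ν f y x)
                + b * (Dtot p ν f z x * g fun i => Dcoef p ν f z x i / Dtot p ν f z x)
              = (a * Dtot p ν f y x + b * Dtot p ν f z x)
                  * (a * Dtot p ν f y x / (a * Dtot p ν f y x + b * Dtot p ν f z x)
                      * g (fun i => Dcoef p ν f y x i / Dtot p ν f y x)
                    + b * Dtot p ν f z x / (a * Dtot p ν f y x + b * Dtot p ν f z x)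
                      * g (fun i => Dcoef p ν f z x i / Dtot p ν f z x)) := by
                linear_combination
                  (g fun i => Dcoef p ν f y x i / Dtot p ν f y x) * hlam'.symm
                  + (g fun i => Dcoef p ν f z x i / Dtot p ν f z x) * hmu'.symm
            _ ≤ (a * Dtot p ν f y x + b * Dtot p ν f z x)
                  * g ((a * Dtot p ν f y x / (a * Dtot p ν f y x + b * Dtot p ν f z x))
                        • (fun i => Dcoef p ν f y x i / Dtot p ν f y x)
                      + (b * Dtot p ν f z x / (a * Dtot p ν f y x + b * Dtot p ν f z x))
                        • (fun i => Dcoef p ν f z x i / Dtot p ν f z x)) :=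
                mul_le_mul_of_nonneg_left hgc hpos.le
    · -- total mass zero
      have h0 : a * Dtot p ν f y x + b * Dtot p ν f z x = 0 :=
        le_antisymm (not_lt.1 hpos) (by positivity)
      have hay : a * Dtot p ν f y x = 0 := by
        nlinarith [mul_nonneg ha hDy0, mul_nonneg hb hDz0]
      have hbz : b * Dtot p ν f z x = 0 := by
        nlinarith [mul_nonneg ha hDy0, mul_nonneg hb hDz0]
      have e1 : a * F y x = 0 := by
        simp only [hFdef]; rw [← mul_assoc, hay, zero_mul]
      have e2 : b * F z x = 0 := by
        simp only [hFdef]; rw [← mul_assoc, hbz, zero_mul]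
      have e3 : F (a • y + b • z) x = 0 := by
        simp only [hFdef]; rw [hDπ, h0, zero_mul]
      rw [e1, e2, e3, add_zero]
  constructor
  · refine ⟨convex_stdSimplex ℝ _, fun y hy z hz a b ha hb hab => ?_⟩
    have hyn : ∀ i, 0 ≤ y i := fun i => hy.1 i
    have hzn : ∀ i, 0 ≤ z i := fun i => hz.1 i
    have hmem : a • y + b • z ∈ stdSimplex ℝ (Fin (M + 1)) :=
      convex_stdSimplex ℝ _ hy hz ha hb hab
    have hTeq : ∀ π, Toper m p ν f g π = ∫ x, F π x ∂m := fun π => rfl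
    simp only [smul_eq_mul, hTeq]
    rw [← integral_const_mul, ← integral_const_mul,
      ← integral_add ((hFint y hyn).const_mul a) ((hFint z hzn).const_mul b)]
    exact integral_mono (((hFint y hyn).const_mul a).add ((hFint z hzn).const_mul b))
      (hFint _ fun i => hmem.1 i) (fun x => key y z hyn hzn a b ha hb hab x)
  · refine ⟨C', fun π hπ => ?_⟩
    have hπn : ∀ i, 0 ≤ π i := fun i => hπ.1 i
    calc |Toper m p ν f g π| = |∫ x, F π x ∂m| := rfl
      _ ≤ ∫ x, |F π x| ∂m := by
          simpa [Real.norm_eq_abs] using norm_integral_le_integral_norm (F π) (μ := m)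
      _ ≤ ∫ x, C' * Dtot p ν f π x ∂m :=
          integral_mono (hFint π hπn).abs ((hDint π).const_mul C') (fun x => hFbound π hπn x)
      _ = C' * ∫ x, Dtot p ν f π x ∂m := integral_const_mul _ _
      _ = C' := by rw [hDintegral π hπ, mul_one]
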